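/- Let U and V be Fréchet spaces (complete metrizable locally convex real topological vector spaces) with the Montel property, and let W be a locally convex Hausdorff topological real vector space. Suppose φ_t : U → V and ψ_t : V → W, for t ∈ (0,1), are families of continuous linear maps, and φ₀ : U → V, ψ₀ : V → W are continuous linear maps such that φ_t(u) → φ₀(u) for every u ∈ U and ψ_t(v) → ψ₀(v) for every v ∈ V as t → 0. Then the composite family ψ_t ∘ φ_t converges to ψ₀ ∘ φ₀ in the strong topology on continuous linear maps U → W as t → 0. -/

import Mathlib

open Filter Set


open Topology Uniformity Bornology

/-- Equicontinuous + pointwise convergence on a compact set gives uniform convergence. -/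
lemma aux_tendstoUniformlyOn {ι X α : Type*} [TopologicalSpace X] [UniformSpace α]
    {F : ι → X → α} {f : X → α} {K : Set X} (hK : IsCompact K)
    (heq : EquicontinuousOn F K) {ℱ : Filter ι}
    (hpt : ∀ x ∈ K, Tendsto (F · x) ℱ (𝓝 (f x))) :
    TendstoUniformlyOn F f ℱ K := by
  have h := (EquicontinuousOn.tendsto_uniformOnFun_iff_pi' (𝔖 := {K})
      (by simpa) (by simpa) ℱ f).mpr ?_
  · exact (UniformOnFun.tendsto_iff_tendstoUniformlyOn (𝔖 := {K})).mp h K rfl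
  · rw [tendsto_pi_nhds]
    intro x
    exact hpt x (by simpa using x.2)

/-- A uniformly equicontinuous family of continuous linear maps sends a bounded set to a
uniformly bounded family of sets. -/
lemma aux_bounded {U V : Type*} {ι : Type*}
    [AddCommGroup U] [Module ℝ U] [UniformSpace U] [IsUniformAddGroup U] [ContinuousSMul ℝ U]
    [AddCommGroup V] [Module ℝ V] [UniformSpace V] [IsUniformAddGroup V]
    (Φ : ι → U →L[ℝ] V) (hΦeq : UniformEquicontinuous (fun n => ⇑(Φ n)))
    {S : Set U} (hS : IsVonNBounded ℝ S) :
    IsVonNBounded ℝ (⋃ n, Φ n '' S) := by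
  intro V0 hV0
  have hent : {p : V × V | p.2 - p.1 ∈ V0} ∈ 𝓤 V := by
    rw [uniformity_eq_comap_nhds_zero V]; exact preimage_mem_comap hV0
  have h0 := hΦeq.equicontinuous 0 _ hent
  have h0' : ∀ᶠ x in 𝓝 (0 : U), ∀ n, Φ n x ∈ V0 := by
    filter_upwards [h0] with x hx n
    simpa using hx n
  have habs : Absorbs ℝ {x : U | ∀ n, Φ n x ∈ V0} S := hS h0'
  filter_upwards [habs] with a ha
  rintro - ⟨-, ⟨n, rfl⟩, y, hyS, rfl⟩
  rcases ha hyS with ⟨z, hz, rfl⟩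
  exact ⟨Φ n z, hz n, (map_smul _ _ _).symm⟩

/-- **Composition of weakly convergent families of operators converges strongly.**
Let `U` and `V` be Fréchet spaces (complete metrizable locally convex real topological
vector spaces) with the Montel property (every von Neumann bounded set is relatively
compact), and let `W` be a locally convex Hausdorff topological real vector space.
If `φ t : U →L[ℝ] V` and `ψ t : V →L[ℝ] W`, for `t ∈ (0,1)`, converge pointwise to
`φ₀` and `ψ₀` respectively as `t → 0`, then `ψ t ∘ φ t` converges to `ψ₀ ∘ φ₀` in the
strong topology (the topology of uniform convergence on bounded sets, which is the
default topology on continuous linear maps in Mathlib). -/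
theorem composition_of_weakly_convergent_families_converges_strongly
    {U V W : Type*}
    [AddCommGroup U] [Module ℝ U] [UniformSpace U] [IsUniformAddGroup U]
    [ContinuousSMul ℝ U] [LocallyConvexSpace ℝ U] [CompleteSpace U]
    [TopologicalSpace.MetrizableSpace U]
    [AddCommGroup V] [Module ℝ V] [UniformSpace V] [IsUniformAddGroup V]
    [ContinuousSMul ℝ V] [LocallyConvexSpace ℝ V] [CompleteSpace V]
    [TopologicalSpace.MetrizableSpace V]
    [AddCommGroup W] [Module ℝ W] [UniformSpace W] [IsUniformAddGroup W]
    [ContinuousSMul ℝ W] [LocallyConvexSpace ℝ W] [T2Space W]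
    (hUMontel : ∀ s : Set U, Bornology.IsVonNBounded ℝ s → IsCompact (closure s))
    (hVMontel : ∀ s : Set V, Bornology.IsVonNBounded ℝ s → IsCompact (closure s))
    (φ : ℝ → U →L[ℝ] V) (ψ : ℝ → V →L[ℝ] W)
    (φ₀ : U →L[ℝ] V) (ψ₀ : V →L[ℝ] W)
    (hφ : ∀ u : U, Tendsto (fun t => φ t u) (nhdsWithin 0 (Set.Ioo 0 1)) (nhds (φ₀ u)))
    (hψ : ∀ v : V, Tendsto (fun t => ψ t v) (nhdsWithin 0 (Set.Ioo 0 1)) (nhds (ψ₀ v))) :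
    Tendsto (fun t => (ψ t).comp (φ t)) (nhdsWithin 0 (Set.Ioo 0 1))
      (nhds (ψ₀.comp φ₀)) := by
  -- Baire space instances for the Fréchet spaces `U` and `V`
  haveI hcgU : (𝓤 U).IsCountablyGenerated := by
    rw [uniformity_eq_comap_nhds_zero U]; infer_instance
  haveI hcgV : (𝓤 V).IsCountablyGenerated := by
    rw [uniformity_eq_comap_nhds_zero V]; infer_instance
  -- seminorm families on `V` and `W`
  have hqV : WithSeminorms (gaugeSeminormFamily ℝ V) := with_gaugeSeminormFamily
  have hqW : WithSeminorms (gaugeSeminormFamily ℝ W) := with_gaugeSeminormFamily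
  -- reduce to sequences
  rw [tendsto_iff_seq_tendsto]
  intro x hx
  set Φ : ℕ → U →L[ℝ] V := fun n => φ (x n) with hΦdef
  set Ψ : ℕ → V →L[ℝ] W := fun n => ψ (x n) with hΨdef
  have hΦpt : ∀ u : U, Tendsto (fun n => Φ n u) atTop (𝓝 (φ₀ u)) :=
    fun u => (hφ u).comp hx
  have hΨpt : ∀ v : V, Tendsto (fun n => Ψ n v) atTop (𝓝 (ψ₀ v)) :=
    fun v => (hψ v).comp hx
  -- Banach–Steinhaus: the sequences are (uniformly) equicontinuous
  have hΦeq : UniformEquicontinuous (fun n => ⇑(Φ n)) :=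
    hqV.banach_steinhaus fun k u =>
      (((hqV.continuous_seminorm k).tendsto _).comp (hΦpt u)).bddAbove_range
  have hΨeq : UniformEquicontinuous (fun n => ⇑(Ψ n)) :=
    hqW.banach_steinhaus fun k v =>
      (((hqW.continuous_seminorm k).tendsto _).comp (hΨpt v)).bddAbove_range
  -- the strong topology is that of uniform convergence on bounded sets
  rw [show ((fun t => (ψ t).comp (φ t)) ∘ x) = fun n => (Ψ n).comp (Φ n) from rfl]
  refine (UniformConvergenceCLM.tendsto_iff_tendstoUniformlyOn (σ := RingHom.id ℝ) (F := W)
    {S : Set U | IsVonNBounded ℝ S}).mpr ?_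
  intro S hS
  -- `Φ` converges uniformly on the compact closure of the bounded set `S`
  have hSc : IsCompact (closure S) := hUMontel S hS
  have hΦu : TendstoUniformlyOn (fun n => ⇑(Φ n)) (⇑φ₀) atTop (closure S) :=
    aux_tendstoUniformlyOn hSc (hΦeq.equicontinuous.equicontinuousOn _)
      fun u _ => hΦpt u
  -- the set of all values `Φ n u`, `u ∈ S`, together with `φ₀ '' S`, is bounded
  set B : Set V := (⋃ n, Φ n '' S) ∪ φ₀ '' S with hBdef
  have hB : Bornology.IsVonNBounded ℝ B :=
    (aux_bounded Φ hΦeq hS).union (hS.image φ₀)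
  have hBc : IsCompact (closure B) := hVMontel B hB
  -- `Ψ` converges uniformly on the compact closure of `B`
  have hΨu : TendstoUniformlyOn (fun n => ⇑(Ψ n)) (⇑ψ₀) atTop (closure B) :=
    aux_tendstoUniformlyOn hBc (hΨeq.equicontinuous.equicontinuousOn _)
      fun v _ => hΨpt v
  -- assemble
  intro u hu
  rcases comp_mem_uniformity_sets hu with ⟨v, hv, hvu⟩
  have hψ₀uc : UniformContinuous ⇑ψ₀ := ψ₀.uniformContinuous
  have hw : (fun p : V × V => (ψ₀ p.1, ψ₀ p.2)) ⁻¹' v ∈ 𝓤 V := hψ₀uc hv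
  filter_upwards [hΦu _ hw, hΨu v hv] with n h1 h2
  intro y hyS
  have hA : (ψ₀ (φ₀ y), ψ₀ (Φ n y)) ∈ v := h1 y (subset_closure hyS)
  have hmem : Φ n y ∈ closure B :=
    subset_closure (Or.inl (mem_iUnion.mpr ⟨n, mem_image_of_mem _ hyS⟩))
  have hB2 : (ψ₀ (Φ n y), Ψ n (Φ n y)) ∈ v := h2 _ hmem
  exact hvu ⟨_, hA, hB2⟩
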